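/- For every real number t ≤ 0 with t ≠ 0 and t ≠ −1, |(t/(1+t)) · (1 − (e−1)/(e·(1−e^t)))| ≤ 1. -/

import Mathlib

theorem stmt_9 (t : ℝ) (ht : t ≤ 0) (h0 : t ≠ 0) (h1 : t ≠ -1) :
    |(t / (1 + t)) * (1 - (Real.exp 1 - 1) / (Real.exp 1 * (1 - Real.exp t)))| ≤ 1 := by
  have ht' : t < 0 := lt_of_le_of_ne ht h0
  have hE : Real.exp t < 1 := by
    calc Real.exp t < Real.exp 0 := Real.exp_lt_exp.mpr ht'
    _ = 1 := Real.exp_zero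
  have hEpos := Real.exp_pos t
  have hepos := Real.exp_pos (1:ℝ)
  have he2 : (2:ℝ) < Real.exp 1 := by
    have := Real.exp_one_gt_d9
    linarith
  have h1t : 1 + t ≠ 0 := fun h => h1 (by linarith)
  set e := Real.exp 1 with he
  set E := Real.exp t with hEdef
  have h1E : (0:ℝ) < 1 - E := by linarith
  have h1En : (1:ℝ) - E ≠ 0 := ne_of_gt h1E
  have heq : (t / (1 + t)) * (1 - (e - 1) / (e * (1 - E)))
      = t * (1 - E * e) / ((1 + t) * (e * (1 - E))) := by
    field_simp
    ring_nf
  have hEe : E * e = Real.exp (t + 1) := (Real.exp_add t 1).symm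
  rw [heq, abs_div]
  have hdenne : (1 + t) * (e * (1 - E)) ≠ 0 := by
    apply mul_ne_zero h1t (mul_ne_zero (ne_of_gt hepos) h1En)
  rw [div_le_one (abs_pos.mpr hdenne)]
  rcases lt_or_ge t (-1) with hcase | hcase
  · -- t < -1 : exp(t+1) ≥ 1 + (t+1)(e-1)
    have hu : t + 1 < 0 := by linarith
    have key : 1 + (t + 1) * (e - 1) ≤ E * e := by
      rw [hEe]
      have h2 := Real.add_one_le_exp (t + 1)
      nlinarith
    have hEe1 : E * e < 1 := by
      rw [hEe]
      calc Real.exp (t + 1) < Real.exp 0 := Real.exp_lt_exp.mpr (by linarith)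
      _ = 1 := Real.exp_zero
    have hnum : t * (1 - E * e) < 0 := by nlinarith
    have hden : (1 + t) * (e * (1 - E)) < 0 := by nlinarith
    rw [abs_of_neg hnum, abs_of_neg hden]
    nlinarith
  · -- -1 ≤ t : exp(t+1) ≤ 1 + (t+1)(e-1)  (convexity)
    have hu0 : 0 ≤ t + 1 := by linarith
    have hu1 : t + 1 ≤ 1 := by linarith
    have key : E * e ≤ 1 + (t + 1) * (e - 1) := by
      rw [hEe]
      have := convexOn_exp.2 (Set.mem_univ (0:ℝ)) (Set.mem_univ (1:ℝ))
        (by linarith : (0:ℝ) ≤ 1 - (t + 1)) hu0 (by ring : (1 - (t+1)) + (t+1) = 1)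
      simp only [smul_eq_mul, mul_zero, mul_one, zero_add, Real.exp_zero] at this
      linarith
    have hEe1 : 1 < E * e := by
      rw [hEe]
      have htpos : 0 < t + 1 := lt_of_le_of_ne hu0 (fun h => h1 (by linarith))
      calc (1:ℝ) = Real.exp 0 := Real.exp_zero.symm
      _ < Real.exp (t + 1) := Real.exp_lt_exp.mpr (by linarith)
    have hnum : 0 < t * (1 - E * e) := by nlinarith
    have h1tpos : 0 < 1 + t := lt_of_le_of_ne (by linarith) (Ne.symm h1t)
    have hden : 0 < (1 + t) * (e * (1 - E)) := by
      exact mul_pos h1tpos (mul_pos hepos h1E)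
    rw [abs_of_pos hnum, abs_of_pos hden]
    nlinarith
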